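/- Fix ω > 0 and z₀ ∈ ℂ, and let G(z) := (ω/(4π)) · ((conj z − conj z₀)/(z − z₀)) · (1 + z₀·conj z)² / ((1+|z|²)(1+|z₀|²)) for z ≠ z₀. Then |G(z)| ≤ ω/(4π) for every z ≠ z₀. (This is the paper's claim, correcting an earlier erroneous statement, that the absolute value of the memory solution (4.10) remains O(1) everywhere, including as z → z₀.) -/

import Mathlib

noncomputable section

/-- The paper's gravitational memory Green's function (4.10):
`G(z) = (ω/4π) ((z̄ − z̄₀)/(z − z₀)) (1 + z₀ z̄)² / ((1+|z|²)(1+|z₀|²))`. -/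
def memG (ω : ℝ) (z₀ z : ℂ) : ℂ :=
  ((ω / (4 * Real.pi) : ℝ) : ℂ) *
    (((starRingEnd ℂ) z - (starRingEnd ℂ) z₀) / (z - z₀)) *
    (1 + z₀ * (starRingEnd ℂ) z) ^ 2 /
    (((1 + ‖z‖ ^ 2 : ℝ) : ℂ) * ((1 + ‖z₀‖ ^ 2 : ℝ) : ℂ))

/-- The gravitational memory solution (4.10) is bounded: `|G(z)| ≤ ω/(4π)` for
all `z ≠ z₀` — its absolute value stays `O(1)` even as `z → z₀`. -/
theorem memG_bounded (ω : ℝ) (hω : 0 < ω) (z₀ : ℂ) (z : ℂ) (hz : z ≠ z₀) :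
    ‖memG ω z₀ z‖ ≤ ω / (4 * Real.pi) := by
  have hpi : 0 < Real.pi := Real.pi_pos
  have hc : 0 < ω / (4 * Real.pi) := by positivity
  have hsub : z - z₀ ≠ 0 := sub_ne_zero.mpr hz
  have habs : ‖z - z₀‖ ≠ 0 := norm_ne_zero_iff.mpr hsub
  -- phase factor has modulus 1
  have hphase : ‖((starRingEnd ℂ) z - (starRingEnd ℂ) z₀) / (z - z₀)‖ = 1 := by
    rw [norm_div, ← map_sub, Complex.norm_conj, div_self habs]
  -- denominator positive
  have hd1 : (0:ℝ) < 1 + ‖z‖ ^ 2 := by positivity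
  have hd2 : (0:ℝ) < 1 + ‖z₀‖ ^ 2 := by positivity
  have hnum : ‖1 + z₀ * (starRingEnd ℂ) z‖ ^ 2
      ≤ (1 + ‖z‖ ^ 2) * (1 + ‖z₀‖ ^ 2) := by
    have h1 : ‖1 + z₀ * (starRingEnd ℂ) z‖
        ≤ 1 + ‖z₀‖ * ‖z‖ := by
      calc ‖1 + z₀ * (starRingEnd ℂ) z‖
          ≤ ‖(1:ℂ)‖ + ‖z₀ * (starRingEnd ℂ) z‖ := by
            exact norm_add_le _ _
        _ = 1 + ‖z₀‖ * ‖z‖ := by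
            simp [norm_mul, Complex.norm_conj]
    have h2 : (1 + ‖z₀‖ * ‖z‖) ^ 2
        ≤ (1 + ‖z‖ ^ 2) * (1 + ‖z₀‖ ^ 2) := by
      nlinarith [sq_nonneg (‖z‖ - ‖z₀‖), norm_nonneg z,
        norm_nonneg z₀]
    calc ‖1 + z₀ * (starRingEnd ℂ) z‖ ^ 2
        ≤ (1 + ‖z₀‖ * ‖z‖) ^ 2 := by
          apply pow_le_pow_left₀ (norm_nonneg _) h1
      _ ≤ _ := h2
  have : ‖memG ω z₀ z‖
      = (ω / (4 * Real.pi)) *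
        (‖1 + z₀ * (starRingEnd ℂ) z‖ ^ 2
          / ((1 + ‖z‖ ^ 2) * (1 + ‖z₀‖ ^ 2))) := by
    unfold memG
    rw [norm_div, norm_mul, norm_mul, norm_pow, hphase]
    rw [norm_mul]
    simp only [Complex.norm_real, Real.norm_eq_abs, mul_div_assoc]
    rw [abs_of_pos hc, abs_of_pos hd1, abs_of_pos hd2, mul_one]
  rw [this]
  nth_rewrite 2 [← mul_one (ω / (4 * Real.pi))]
  apply mul_le_mul_of_nonneg_left _ hc.le
  rw [div_le_one (by positivity)]
  exact hnum

end
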